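/- Fix R = 2/3, m ≥ 0 and q ∈ [0, 1/8]. There exist η₀ ∈ (0, 1/2) and C > 0 such that whenever ρ > 0, u ∈ ℝ³ and θ > 0 satisfy |ρ − 1| + |u| + |θ − 3/2| ≤ η₀, one has ∫_{ℝ³} (1 + |v|²)^m · e^{q|v|²} · (M_{[ρ,u,θ]}(v) − μ(v))² · μ(v)^{−1} dv ≤ C·(|ρ − 1| + |u| + |θ − 3/2|)². -/

import Mathlib

open MeasureTheory

/-- The local Maxwellian `M_{[ρ,u,θ]}(v) = ρ (2πRθ)^{−3/2} exp(−|v−u|²/(2Rθ))`. -/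
noncomputable def localMaxwellian (R ρ θ : ℝ) (u v : EuclideanSpace ℝ (Fin 3)) : ℝ :=
  ρ * (2 * Real.pi * R * θ) ^ (-(3 : ℝ) / 2) * Real.exp (-‖v - u‖ ^ 2 / (2 * R * θ))

/-- The global Maxwellian `μ(v) = (2π)^{−3/2} exp(−|v|²/2) = M_{[1,0,3/2]}` (R = 2/3). -/
noncomputable def globalMaxwellian (v : EuclideanSpace ℝ (Fin 3)) : ℝ :=
  (2 * Real.pi) ^ (-(3 : ℝ) / 2) * Real.exp (-‖v‖ ^ 2 / 2)

lemma abs_exp_sub_exp_le (a b : ℝ) :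
    |Real.exp a - Real.exp b| ≤ (Real.exp a + Real.exp b) * |a - b| := by
  wlog h : b ≤ a with H
  · have := H b a (le_of_not_ge h)
    rwa [abs_sub_comm, abs_sub_comm b a, add_comm] at this
  rw [abs_of_nonneg (sub_nonneg.2 (Real.exp_le_exp.2 h)), abs_of_nonneg (sub_nonneg.2 h)]
  have h1 : b - a + 1 ≤ Real.exp (b - a) := Real.add_one_le_exp (b - a)
  have h2 : Real.exp b = Real.exp (b - a) * Real.exp a := by rw [← Real.exp_add]; ring_nf
  nlinarith [Real.exp_pos a, Real.exp_pos b, Real.exp_pos (b - a)]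

lemma rpow_neg_three_halves {x : ℝ} (hx : 0 < x) : x ^ (-(3:ℝ)/2) = (x * Real.sqrt x)⁻¹ := by
  rw [show (-(3:ℝ)/2) = -(3/2) by norm_num, Real.rpow_neg hx.le]
  congr 1
  rw [show ((3:ℝ)/2) = 1 + 1/2 by norm_num, Real.rpow_add hx, Real.rpow_one,
    ← Real.sqrt_eq_rpow]

lemma inv_mul_sqrt_le_one {a : ℝ} (ha : 1 ≤ a) : (a * Real.sqrt a)⁻¹ ≤ 1 := by
  have h1 : 1 ≤ Real.sqrt a := Real.one_le_sqrt.2 ha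
  have : (1:ℝ) ≤ a * Real.sqrt a := by nlinarith
  exact inv_le_one_of_one_le₀ this

lemma inv_mul_sqrt_diff {a b : ℝ} (ha1 : 1 ≤ a) (ha7 : a ≤ 7) (hb1 : 1 ≤ b) (hb7 : b ≤ 7) :
    |(a * Real.sqrt a)⁻¹ - (b * Real.sqrt b)⁻¹| ≤ 14 * |a - b| := by
  set sa := Real.sqrt a with hsa
  set sb := Real.sqrt b with hsb
  have ha0 : (0:ℝ) ≤ a := by linarith
  have hb0 : (0:ℝ) ≤ b := by linarith
  have hsa2 : sa * sa = a := Real.mul_self_sqrt ha0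
  have hsb2 : sb * sb = b := Real.mul_self_sqrt hb0
  have hsa1 : 1 ≤ sa := Real.one_le_sqrt.2 ha1
  have hsb1 : 1 ≤ sb := Real.one_le_sqrt.2 hb1
  have h9 : Real.sqrt 9 = 3 := by
    rw [show (9:ℝ) = 3^2 by norm_num, Real.sqrt_sq (by norm_num)]
  have hsa3 : sa ≤ 3 := by rw [hsa, ← h9]; exact Real.sqrt_le_sqrt (by linarith)
  have hsb3 : sb ≤ 3 := by rw [hsb, ← h9]; exact Real.sqrt_le_sqrt (by linarith)
  have hane : a * sa ≠ 0 := by positivity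
  have hbne : b * sb ≠ 0 := by positivity
  rw [inv_sub_inv hane hbne, abs_div, abs_mul]
  have hd1 : (1:ℝ) ≤ |a * sa| * |b * sb| := by
    rw [abs_of_nonneg (by positivity), abs_of_nonneg (by positivity)]
    have h1 : 1 ≤ a * sa := by nlinarith
    have h2 : 1 ≤ b * sb := by nlinarith
    nlinarith
  have hkey : |b * sb - a * sa| ≤ 14 * |a - b| := by
    rcases le_total a b with hab | hab
    · have hsab : sa ≤ sb := by rw [hsa, hsb]; exact Real.sqrt_le_sqrt hab
      rw [abs_of_nonneg (by nlinarith), abs_of_nonpos (by linarith)]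
      nlinarith [mul_nonneg (sub_nonneg.2 hsab)
        (show (0:ℝ) ≤ 14*sa + 14*sb - (sa*sa + sa*sb + sb*sb) by nlinarith)]
    · have hsab : sb ≤ sa := by rw [hsa, hsb]; exact Real.sqrt_le_sqrt hab
      rw [abs_of_nonpos (by nlinarith), abs_of_nonneg (by linarith)]
      nlinarith [mul_nonneg (sub_nonneg.2 hsab)
        (show (0:ℝ) ≤ 14*sb + 14*sa - (sb*sb + sa*sb + sa*sa) by nlinarith)]
  calc |b * sb - a * sa| / (|a * sa| * |b * sb|) ≤ |b * sb - a * sa| / 1 :=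
        div_le_div_of_nonneg_left (abs_nonneg _) one_pos hd1
    _ = |b * sb - a * sa| := by ring
    _ ≤ 14 * |a - b| := hkey

lemma exp_small_le_two : Real.exp (6/1000 : ℝ) ≤ 2 := by
  have h1 : -(6/1000 : ℝ) + 1 ≤ Real.exp (-(6/1000)) := Real.add_one_le_exp _
  have h2 : Real.exp (6/1000 : ℝ) * Real.exp (-(6/1000)) = 1 := by
    rw [← Real.exp_add]; norm_num
  nlinarith [Real.exp_pos (6/1000 : ℝ), Real.exp_pos (-(6/1000) : ℝ)]

lemma integrable_gauss3 {b : ℝ} (hb : 0 < b) :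
    Integrable (fun v : EuclideanSpace ℝ (Fin 3) => Real.exp (-b * ‖v‖^2)) := by
  have h := GaussianFourier.integrable_cexp_neg_mul_sq_norm_add
    (V := EuclideanSpace ℝ (Fin 3)) (b := (b:ℂ)) (by simpa using hb) 0 0
  have h2 := h.norm
  simpa [Complex.norm_exp, ← Complex.ofReal_pow, neg_mul] using h2

noncomputable def Gmaj (m : ℝ) (v : EuclideanSpace ℝ (Fin 3)) : ℝ :=
  (1 + ‖v‖^2) ^ m * (1 + ‖v‖^2)^2 * Real.exp (-(1/4) * ‖v‖^2)

lemma Gmaj_nonneg (m : ℝ) (v : EuclideanSpace ℝ (Fin 3)) : 0 ≤ Gmaj m v := by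
  unfold Gmaj
  have h : (0:ℝ) ≤ (1 + ‖v‖^2) ^ m := Real.rpow_nonneg (by positivity) m
  positivity

lemma Gmaj_cont (m : ℝ) : Continuous (Gmaj m) := by
  unfold Gmaj
  have h1 : Continuous fun v : EuclideanSpace ℝ (Fin 3) => 1 + ‖v‖^2 :=
    continuous_const.add ((continuous_norm).pow 2)
  have h2 : Continuous fun v : EuclideanSpace ℝ (Fin 3) => (1 + ‖v‖^2) ^ m :=
    h1.rpow_const (fun v => Or.inl (by positivity))
  exact ((h2.mul (h1.pow 2)).mul ((continuous_const.mul ((continuous_norm).pow 2)).rexp))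

lemma poly_le_exp (n : ℕ) (s : ℝ) (hs : 0 ≤ s) :
    (1 + s) ^ n ≤ (n.factorial : ℝ) * 8 ^ n * 3 * Real.exp ((1/8) * s) := by
  have h1 : ((1 + s)/8) ^ n / (n.factorial : ℝ) ≤ Real.exp ((1 + s)/8) :=
    Real.pow_div_factorial_le_exp ((1+s)/8) (by positivity) n
  have h2 : Real.exp ((1 + s)/8) = Real.exp (1/8 : ℝ) * Real.exp ((1/8) * s) := by
    rw [← Real.exp_add]; congr 1; ring
  have h3 : Real.exp (1/8 : ℝ) ≤ 3 := by
    have := Real.exp_one_lt_d9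
    have h4 : Real.exp (1/8 : ℝ) ≤ Real.exp 1 := Real.exp_le_exp.2 (by norm_num)
    linarith
  have hfac : (0:ℝ) < (n.factorial : ℝ) := by positivity
  have h5 : (1 + s) ^ n = ((1 + s)/8) ^ n * 8 ^ n := by
    rw [div_pow, div_mul_cancel₀]; positivity
  have hexp : 0 < Real.exp ((1/8) * s) := Real.exp_pos _
  rw [h5]
  calc ((1 + s)/8) ^ n * 8 ^ n ≤ ((n.factorial : ℝ) * Real.exp ((1+s)/8)) * 8 ^ n := by
        apply mul_le_mul_of_nonneg_right _ (by positivity)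
        rw [div_le_iff₀ hfac] at h1; linarith [h1]
    _ = (n.factorial : ℝ) * 8 ^ n * (Real.exp (1/8:ℝ) * Real.exp ((1/8) * s)) := by
        rw [h2]; ring
    _ ≤ (n.factorial : ℝ) * 8 ^ n * (3 * Real.exp ((1/8) * s)) := by
        apply mul_le_mul_of_nonneg_left _ (by positivity)
        exact mul_le_mul_of_nonneg_right h3 hexp.le
    _ = (n.factorial : ℝ) * 8 ^ n * 3 * Real.exp ((1/8) * s) := by ring

lemma integrable_Gmaj (m : ℝ) : Integrable (Gmaj m) := by
  set n : ℕ := ⌈m⌉₊ + 2 with hn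
  set c : ℝ := (n.factorial : ℝ) * 8 ^ n * 3 with hc
  apply Integrable.mono' ((integrable_gauss3 (b := 1/8) (by norm_num)).const_mul c)
  · exact (Gmaj_cont m).aestronglyMeasurable
  · filter_upwards with v
    rw [Real.norm_of_nonneg (Gmaj_nonneg m v)]
    unfold Gmaj
    have hb : (1:ℝ) ≤ 1 + ‖v‖^2 := le_add_of_nonneg_right (by positivity)
    have h1 : (1 + ‖v‖^2) ^ m ≤ (1 + ‖v‖^2) ^ (⌈m⌉₊ : ℝ) :=
      Real.rpow_le_rpow_of_exponent_le hb (Nat.le_ceil m)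
    rw [Real.rpow_natCast] at h1
    have h2 : (1 + ‖v‖^2) ^ m * (1 + ‖v‖^2)^2 ≤ (1 + ‖v‖^2) ^ n := by
      rw [hn, pow_add]
      exact mul_le_mul_of_nonneg_right h1 (by positivity)
    have h3 : (1 + ‖v‖^2) ^ n ≤ c * Real.exp ((1/8) * ‖v‖^2) := poly_le_exp n _ (by positivity)
    have h4 : Real.exp ((1/8) * ‖v‖^2) * Real.exp (-(1/4) * ‖v‖^2)
        = Real.exp (-(1/8) * ‖v‖^2) := by
      rw [← Real.exp_add]; congr 1; ring
    have hexp : (0:ℝ) < Real.exp (-(1/4) * ‖v‖^2) := Real.exp_pos _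
    calc (1 + ‖v‖^2) ^ m * (1 + ‖v‖^2)^2 * Real.exp (-(1/4) * ‖v‖^2)
        ≤ (c * Real.exp ((1/8) * ‖v‖^2)) * Real.exp (-(1/4) * ‖v‖^2) :=
          mul_le_mul_of_nonneg_right (h2.trans h3) hexp.le
      _ = c * Real.exp (-(1/8) * ‖v‖^2) := by rw [mul_assoc, h4]


lemma core_arg_bound {r e p d δ w : ℝ} (hr : 0 ≤ r) (he0 : 0 ≤ e) (heδ : e ≤ δ)
    (hδc : δ ≤ 1/100) (hδ0 : 0 ≤ δ) (hpl : -(r * e) ≤ p) (hpr : p ≤ r * e)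
    (hdl : 2 - (4/3) * δ ≤ d) (hdu : d ≤ 2 + (4/3) * δ)
    (hw : w = r^2 - 2*p + e^2) :
    |d * r^2 - 2 * w| ≤ 3 * δ * (1 + r^2) * (2 * d) := by
  have hr2 : (0:ℝ) ≤ r^2 := sq_nonneg r
  have h2r : 2 * r ≤ 1 + r^2 := by linarith [sq_nonneg (r - 1)]
  have hec : e ≤ 1/100 := heδ.trans hδc
  have he2 : e^2 ≤ δ * (1/100) := by nlinarith
  have hre : r * e ≤ r * δ := mul_le_mul_of_nonneg_left heδ hr
  have h3 : δ * (2 * r) ≤ δ * (1 + r^2) := mul_le_mul_of_nonneg_left h2r hδ0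
  have h1u : (d - 2) * r^2 ≤ (4/3 * δ) * r^2 :=
    mul_le_mul_of_nonneg_right (by linarith) hr2
  have h1l : (-(4/3 * δ)) * r^2 ≤ (d - 2) * r^2 :=
    mul_le_mul_of_nonneg_right (by linarith) hr2
  have h4 : (4/3 * δ) * r^2 ≤ (4/3 * δ) * (1 + r^2) :=
    mul_le_mul_of_nonneg_left (by linarith) (by positivity)
  have h5 : 6 * δ * (1 + r^2) * (149/75) ≤ 6 * δ * (1 + r^2) * d :=
    mul_le_mul_of_nonneg_left (by linarith) (by positivity)
  rw [abs_le]
  constructor <;> nlinarith [mul_nonneg hδ0 hr2]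

lemma core_lower_bound {r e p d δ w : ℝ} (hr : 0 ≤ r) (he0 : 0 ≤ e) (heδ : e ≤ δ)
    (hδc : δ ≤ 1/100) (hδ0 : 0 ≤ δ) (hpl : -(r * e) ≤ p) (hpr : p ≤ r * e)
    (hdl : 149/75 ≤ d) (hdu : d ≤ 151/75)
    (hw : w = r^2 - 2*p + e^2) :
    (49/100 * r^2 - 6/1000) * d ≤ w := by
  have hr2 : (0:ℝ) ≤ r^2 := sq_nonneg r
  have h2r : 2 * r ≤ 1 + r^2 := by linarith [sq_nonneg (r - 1)]
  have hec : e ≤ 1/100 := heδ.trans hδc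
  have hre : r * e ≤ r * (1/100) := mul_le_mul_of_nonneg_left hec hr
  have hdr : d * r^2 ≤ (151/75) * r^2 := mul_le_mul_of_nonneg_right hdu hr2
  have he2 : (0:ℝ) ≤ e^2 := sq_nonneg e
  nlinarith

set_option maxHeartbeats 1000000 in
/-- Weighted quadratic estimate on `M − μ`: for `m ≥ 0` and `q ∈ [0, 1/8]`, there are
`η₀ ∈ (0, 1/2)` and `C > 0` such that whenever `|ρ−1| + |u| + |θ−3/2| ≤ η₀`,
`∫ (1+|v|²)^m e^{q|v|²} (M_{[ρ,u,θ]}(v) − μ(v))² μ(v)⁻¹ dv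
  ≤ C (|ρ−1| + |u| + |θ−3/2|)²` (with `R = 2/3`). -/
theorem maxwellian_difference_weighted_bound
    (m q : ℝ) (hm : 0 ≤ m) (hq0 : 0 ≤ q) (hq : q ≤ 1 / 8) :
    ∃ η₀ : ℝ, 0 < η₀ ∧ η₀ < 1 / 2 ∧ ∃ C : ℝ, 0 < C ∧
      ∀ (ρ θ : ℝ) (u : EuclideanSpace ℝ (Fin 3)), 0 < ρ → 0 < θ →
        |ρ - 1| + ‖u‖ + |θ - 3 / 2| ≤ η₀ →
        Integrable (fun v : EuclideanSpace ℝ (Fin 3) =>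
          (1 + ‖v‖ ^ 2) ^ m * Real.exp (q * ‖v‖ ^ 2) *
            (localMaxwellian (2 / 3) ρ θ u v - globalMaxwellian v) ^ 2
            / globalMaxwellian v) ∧
        (∫ v : EuclideanSpace ℝ (Fin 3),
            (1 + ‖v‖ ^ 2) ^ m * Real.exp (q * ‖v‖ ^ 2) *
              (localMaxwellian (2 / 3) ρ θ u v - globalMaxwellian v) ^ 2
              / globalMaxwellian v)
          ≤ C * (|ρ - 1| + ‖u‖ + |θ - 3 / 2|) ^ 2 := by
  have hIG : (0:ℝ) ≤ ∫ v, Gmaj m v := integral_nonneg (Gmaj_nonneg m)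
  refine ⟨1/100, by norm_num, by norm_num, 270400 * (∫ v, Gmaj m v) + 1,
    by linarith, ?_⟩
  intro ρ θ u hρ hθ hle
  set δ := |ρ - 1| + ‖u‖ + |θ - 3 / 2| with hδdef
  have habsρ : 0 ≤ |ρ - 1| := abs_nonneg _
  have habsθ : 0 ≤ |θ - 3/2| := abs_nonneg _
  have hnu : 0 ≤ ‖u‖ := norm_nonneg _
  have hδ0 : 0 ≤ δ := by rw [hδdef]; positivity
  have hδc : δ ≤ 1/100 := hle
  have hρδ : |ρ - 1| ≤ δ := by rw [hδdef]; linarith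
  have huδ : ‖u‖ ≤ δ := by rw [hδdef]; linarith
  have hθδ : |θ - 3/2| ≤ δ := by rw [hδdef]; linarith
  obtain ⟨hθl, hθr⟩ := abs_le.1 hθδ
  have huc : ‖u‖ ≤ 1/100 := huδ.trans hδc
  have hθc1 : 149/100 ≤ θ := by linarith
  have hθc2 : θ ≤ 151/100 := by linarith
  have hπl : (3:ℝ) < Real.pi := Real.pi_gt_three
  have hπu : Real.pi < 3.15 := Real.pi_lt_d2
  have hπθl : 3 * (149/100) ≤ Real.pi * θ :=
    mul_le_mul hπl.le hθc1 (by norm_num) (by positivity)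
  have hπθu : Real.pi * θ ≤ 3.15 * (151/100) :=
    mul_le_mul hπu.le hθc2 (by linarith) (by norm_num)
  have hx1 : (1:ℝ) ≤ 2 * Real.pi * (2/3) * θ := by linarith
  have hx7 : 2 * Real.pi * (2/3) * θ ≤ 7 := by linarith
  have h2π1 : (1:ℝ) ≤ 2 * Real.pi := by linarith
  have h2π7 : 2 * Real.pi ≤ 7 := by linarith
  have hxpos : (0:ℝ) < 2 * Real.pi * (2/3) * θ := by linarith
  have h2πpos : (0:ℝ) < 2 * Real.pi := by linarith
  set sx := Real.sqrt (2 * Real.pi * (2/3) * θ) with hsx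
  set s0 := Real.sqrt (2 * Real.pi) with hs0
  have hsx1 : 1 ≤ sx := Real.one_le_sqrt.2 hx1
  have hs01 : 1 ≤ s0 := Real.one_le_sqrt.2 h2π1
  have hs0sq : s0 * s0 = 2 * Real.pi := Real.mul_self_sqrt h2πpos.le
  have hs0u : s0 ≤ 251/100 := by
    rw [hs0, show (251/100:ℝ) = Real.sqrt ((251/100)^2) from (Real.sqrt_sq (by norm_num)).symm]
    exact Real.sqrt_le_sqrt (by linarith [(by norm_num : ((251:ℝ)/100)^2 = 63001/10000)])
  -- the inverse normalisation constants
  have hA0pos : (0:ℝ) < ((2 * Real.pi) * s0)⁻¹ := by positivity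
  have hA0le1 : ((2 * Real.pi) * s0)⁻¹ ≤ 1 := inv_mul_sqrt_le_one h2π1
  have hA0ge : (1/16 : ℝ) ≤ ((2 * Real.pi) * s0)⁻¹ := by
    have h16 : (2 * Real.pi) * s0 ≤ 16 := by
      have hh : Real.pi * s0 ≤ 3.15 * (251/100) :=
        mul_le_mul hπu.le hs0u (by linarith) (by norm_num)
      linarith
    have hps : (0:ℝ) < (2 * Real.pi) * s0 := by positivity
    calc (1/16 : ℝ) = 16⁻¹ := by norm_num
      _ ≤ ((2 * Real.pi) * s0)⁻¹ := inv_anti₀ hps h16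
  have hAxpos : (0:ℝ) < ((2 * Real.pi * (2/3) * θ) * sx)⁻¹ := by positivity
  have hAxle1 : ((2 * Real.pi * (2/3) * θ) * sx)⁻¹ ≤ 1 := inv_mul_sqrt_le_one hx1
  -- coefficient difference bound
  have hxx0 : |2 * Real.pi * (2/3) * θ - 2 * Real.pi| ≤ (21/5) * δ := by
    have hh1 : Real.pi * (θ - 3/2) ≤ Real.pi * δ :=
      mul_le_mul_of_nonneg_left hθr (by positivity)
    have hh2 : Real.pi * (-δ) ≤ Real.pi * (θ - 3/2) :=
      mul_le_mul_of_nonneg_left hθl (by positivity)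
    have hh3 : Real.pi * δ ≤ 3.15 * δ := mul_le_mul_of_nonneg_right hπu.le hδ0
    rw [abs_le]
    constructor <;> linarith
  have hA : |ρ * ((2 * Real.pi * (2/3) * θ) * sx)⁻¹ - ((2 * Real.pi) * s0)⁻¹| ≤ 60 * δ := by
    have hsplit : ρ * ((2 * Real.pi * (2/3) * θ) * sx)⁻¹ - ((2 * Real.pi) * s0)⁻¹
        = (ρ - 1) * ((2 * Real.pi * (2/3) * θ) * sx)⁻¹
          + (((2 * Real.pi * (2/3) * θ) * sx)⁻¹ - ((2 * Real.pi) * s0)⁻¹) := by ring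
    rw [hsplit]
    have h1 : |(ρ - 1) * ((2 * Real.pi * (2/3) * θ) * sx)⁻¹| ≤ δ := by
      rw [abs_mul, abs_of_pos hAxpos]
      calc |ρ - 1| * ((2 * Real.pi * (2/3) * θ) * sx)⁻¹ ≤ δ * 1 :=
            mul_le_mul hρδ hAxle1 hAxpos.le hδ0
        _ = δ := mul_one δ
    have h2 : |((2 * Real.pi * (2/3) * θ) * sx)⁻¹ - ((2 * Real.pi) * s0)⁻¹|
        ≤ 14 * ((21/5) * δ) := by
      calc |((2 * Real.pi * (2/3) * θ) * sx)⁻¹ - ((2 * Real.pi) * s0)⁻¹|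
          ≤ 14 * |2 * Real.pi * (2/3) * θ - 2 * Real.pi| :=
            inv_mul_sqrt_diff hx1 hx7 h2π1 h2π7
        _ ≤ 14 * ((21/5) * δ) := by linarith [hxx0]
    calc |(ρ - 1) * ((2 * Real.pi * (2/3) * θ) * sx)⁻¹
          + (((2 * Real.pi * (2/3) * θ) * sx)⁻¹ - ((2 * Real.pi) * s0)⁻¹)|
        ≤ |(ρ - 1) * ((2 * Real.pi * (2/3) * θ) * sx)⁻¹|
          + |((2 * Real.pi * (2/3) * θ) * sx)⁻¹ - ((2 * Real.pi) * s0)⁻¹| := abs_add_le _ _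
      _ ≤ 60 * δ := by linarith
  -- pointwise bound
  have hpt : ∀ v : EuclideanSpace ℝ (Fin 3),
      (1 + ‖v‖ ^ 2) ^ m * Real.exp (q * ‖v‖ ^ 2) *
        (localMaxwellian (2 / 3) ρ θ u v - globalMaxwellian v) ^ 2 / globalMaxwellian v
      ≤ δ ^ 2 * (270400 * Gmaj m v) := by
    intro v
    have hs : (0:ℝ) ≤ ‖v‖^2 := sq_nonneg _
    have hnv : (0:ℝ) ≤ ‖v‖ := norm_nonneg _
    have h2v : 2 * ‖v‖ ≤ 1 + ‖v‖^2 := by linarith [sq_nonneg (‖v‖ - 1)]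
    have hw : ‖v - u‖^2 = ‖v‖^2 - 2 * (inner ℝ v u : ℝ) + ‖u‖^2 := norm_sub_sq_real v u
    obtain ⟨hpl, hpr⟩ := abs_le.1 (abs_real_inner_le_norm v u)
    have hvδ : ‖v‖ * ‖u‖ ≤ ‖v‖ * δ := mul_le_mul_of_nonneg_left huδ hnv
    have hw0 : (0:ℝ) ≤ ‖v - u‖^2 := sq_nonneg _
    have hdpos : (0:ℝ) < 2 * (2/3) * θ := by linarith
    have hdl : (149/75 : ℝ) ≤ 2 * (2/3) * θ := by linarith
    have hdu : 2 * (2/3) * θ ≤ (151/75 : ℝ) := by linarith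
    have hd2l : 2 - (4/3) * δ ≤ 2 * (2/3) * θ := by linarith
    have hd2u : 2 * (2/3) * θ ≤ 2 + (4/3) * δ := by linarith
    -- exponent difference
    have harg : |(-‖v - u‖ ^ 2 / (2 * (2/3) * θ)) - (-‖v‖ ^ 2 / 2)| ≤ 3 * δ * (1 + ‖v‖^2) := by
      have heq : (-‖v - u‖ ^ 2 / (2 * (2/3) * θ)) - (-‖v‖ ^ 2 / 2)
          = ((2 * (2/3) * θ) * ‖v‖^2 - 2 * ‖v - u‖^2) / (2 * (2 * (2/3) * θ)) := by
        field_simp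
        ring
      rw [heq, abs_div, abs_of_pos (by linarith : (0:ℝ) < 2 * (2 * (2/3) * θ)),
        div_le_iff₀ (by linarith : (0:ℝ) < 2 * (2 * (2/3) * θ))]
      exact core_arg_bound hnv hnu huδ hδc hδ0 hpl hpr hd2l hd2u hw
    set E : ℝ := Real.exp (-‖v - u‖ ^ 2 / (2 * (2/3) * θ)) with hE_def
    set E0 : ℝ := Real.exp (-‖v‖ ^ 2 / 2) with hE0_def
    have hEpos : 0 < E := Real.exp_pos _
    have hE0pos : 0 < E0 := Real.exp_pos _
    have hEd : |E - E0| ≤ (E + E0) * (3 * δ * (1 + ‖v‖^2)) := by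
      calc |E - E0| ≤ (E + E0) * |(-‖v - u‖ ^ 2 / (2 * (2/3) * θ)) - (-‖v‖ ^ 2 / 2)| :=
            abs_exp_sub_exp_le _ _
        _ ≤ (E + E0) * (3 * δ * (1 + ‖v‖^2)) :=
            mul_le_mul_of_nonneg_left harg (by positivity)
    set G' : ℝ := Real.exp (-(49/100) * ‖v‖^2) with hG'_def
    have hG'pos : 0 < G' := Real.exp_pos _
    have hE : E ≤ 2 * G' := by
      have hwlow : (49/100 * ‖v‖^2 - 6/1000) * (2 * (2/3) * θ) ≤ ‖v - u‖^2 :=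
        core_lower_bound hnv hnu huδ hδc hδ0 hpl hpr hdl hdu hw
      have hdiv : (49/100 * ‖v‖^2 - 6/1000) ≤ ‖v - u‖^2 / (2 * (2/3) * θ) :=
        (le_div_iff₀ hdpos).2 hwlow
      calc E ≤ Real.exp (6/1000 + -(49/100) * ‖v‖^2) := by
            rw [hE_def]
            apply Real.exp_le_exp.2
            rw [neg_div]
            linarith
        _ = Real.exp (6/1000 : ℝ) * G' := by rw [Real.exp_add]
        _ ≤ 2 * G' := mul_le_mul_of_nonneg_right exp_small_le_two hG'pos.le
    have hE0G : E0 ≤ G' := by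
      rw [hE0_def, hG'_def]
      apply Real.exp_le_exp.2
      linarith [hs]
    -- bound on |M - μ|
    have hMμ : |localMaxwellian (2/3) ρ θ u v - globalMaxwellian v|
        ≤ 130 * δ * (1 + ‖v‖^2) * G' := by
      have hloc : localMaxwellian (2/3) ρ θ u v
          = ρ * ((2 * Real.pi * (2/3) * θ) * sx)⁻¹ * E := by
        rw [localMaxwellian, rpow_neg_three_halves hxpos]
      have hglo : globalMaxwellian v = ((2 * Real.pi) * s0)⁻¹ * E0 := by
        rw [globalMaxwellian, rpow_neg_three_halves h2πpos]
      rw [hloc, hglo]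
      have hsplit : ρ * ((2 * Real.pi * (2/3) * θ) * sx)⁻¹ * E - ((2 * Real.pi) * s0)⁻¹ * E0
          = (ρ * ((2 * Real.pi * (2/3) * θ) * sx)⁻¹ - ((2 * Real.pi) * s0)⁻¹) * E
            + ((2 * Real.pi) * s0)⁻¹ * (E - E0) := by ring
      rw [hsplit]
      calc |(ρ * ((2 * Real.pi * (2/3) * θ) * sx)⁻¹ - ((2 * Real.pi) * s0)⁻¹) * E
            + ((2 * Real.pi) * s0)⁻¹ * (E - E0)|
          ≤ |(ρ * ((2 * Real.pi * (2/3) * θ) * sx)⁻¹ - ((2 * Real.pi) * s0)⁻¹) * E|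
            + |((2 * Real.pi) * s0)⁻¹ * (E - E0)| := abs_add_le _ _
        _ = |ρ * ((2 * Real.pi * (2/3) * θ) * sx)⁻¹ - ((2 * Real.pi) * s0)⁻¹| * E
            + ((2 * Real.pi) * s0)⁻¹ * |E - E0| := by
            rw [abs_mul, abs_mul, abs_of_pos hEpos, abs_of_pos hA0pos]
        _ ≤ (60 * δ) * E + 1 * ((E + E0) * (3 * δ * (1 + ‖v‖^2))) := by
            apply add_le_add
            · exact mul_le_mul_of_nonneg_right hA hEpos.le
            · exact mul_le_mul hA0le1 hEd (abs_nonneg _) zero_le_one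
        _ ≤ (60 * δ) * (2 * G') + 1 * ((3 * G') * (3 * δ * (1 + ‖v‖^2))) := by
            apply add_le_add
            · exact mul_le_mul_of_nonneg_left hE (by positivity)
            · apply mul_le_mul_of_nonneg_left _ zero_le_one
              exact mul_le_mul_of_nonneg_right (by linarith) (by positivity)
        _ ≤ 130 * δ * (1 + ‖v‖^2) * G' := by
            linarith [mul_nonneg hδ0 hG'pos.le,
              mul_nonneg (mul_nonneg hδ0 hG'pos.le) hs]
    -- squared bound
    have hsq : (localMaxwellian (2/3) ρ θ u v - globalMaxwellian v) ^ 2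
        ≤ 16900 * δ^2 * (1 + ‖v‖^2)^2 * Real.exp (-(49/50) * ‖v‖^2) := by
      have h1 : (localMaxwellian (2/3) ρ θ u v - globalMaxwellian v) ^ 2
          ≤ (130 * δ * (1 + ‖v‖^2) * G') ^ 2 := by
        rw [← sq_abs]
        exact pow_le_pow_left₀ (abs_nonneg _) hMμ 2
      have h2 : G' * G' = Real.exp (-(49/50) * ‖v‖^2) := by
        rw [hG'_def, ← Real.exp_add]; congr 1; ring
      calc (localMaxwellian (2/3) ρ θ u v - globalMaxwellian v) ^ 2
          ≤ (130 * δ * (1 + ‖v‖^2) * G') ^ 2 := h1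
        _ = 16900 * δ^2 * (1 + ‖v‖^2)^2 * (G' * G') := by ring
        _ = 16900 * δ^2 * (1 + ‖v‖^2)^2 * Real.exp (-(49/50) * ‖v‖^2) := by rw [h2]
    have hexp2 : Real.exp (q * ‖v‖ ^ 2) * Real.exp (-(49/50) * ‖v‖^2)
        ≤ Real.exp (-(1/4) * ‖v‖^2) * E0 := by
      rw [hE0_def, ← Real.exp_add, ← Real.exp_add]
      apply Real.exp_le_exp.2
      have hterm : (0:ℝ) ≤ ‖v‖^2 * (23/100 - q) := mul_nonneg hs (by linarith)
      linarith
    have hμpos : 0 < globalMaxwellian v := by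
      rw [globalMaxwellian, rpow_neg_three_halves h2πpos]
      positivity
    have hP : (0:ℝ) ≤ (1 + ‖v‖ ^ 2) ^ m := Real.rpow_nonneg (by positivity) m
    rw [div_le_iff₀ hμpos]
    have hglo : globalMaxwellian v = ((2 * Real.pi) * s0)⁻¹ * E0 := by
      rw [globalMaxwellian, rpow_neg_three_halves h2πpos]
    unfold Gmaj
    calc (1 + ‖v‖ ^ 2) ^ m * Real.exp (q * ‖v‖ ^ 2) *
          (localMaxwellian (2 / 3) ρ θ u v - globalMaxwellian v) ^ 2
        ≤ (1 + ‖v‖ ^ 2) ^ m * Real.exp (q * ‖v‖ ^ 2) *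
          (16900 * δ^2 * (1 + ‖v‖^2)^2 * Real.exp (-(49/50) * ‖v‖^2)) := by
          apply mul_le_mul_of_nonneg_left hsq (by positivity)
      _ = 16900 * δ^2 * (1 + ‖v‖^2)^2 * (1 + ‖v‖ ^ 2) ^ m *
          (Real.exp (q * ‖v‖ ^ 2) * Real.exp (-(49/50) * ‖v‖^2)) := by ring
      _ ≤ 16900 * δ^2 * (1 + ‖v‖^2)^2 * (1 + ‖v‖ ^ 2) ^ m *
          (Real.exp (-(1/4) * ‖v‖^2) * E0) := by
          apply mul_le_mul_of_nonneg_left hexp2 (by positivity)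
      _ = δ ^ 2 * (270400 * ((1 + ‖v‖^2) ^ m * (1 + ‖v‖^2)^2 * Real.exp (-(1/4) * ‖v‖^2)))
          * ((1/16) * E0) := by ring
      _ ≤ δ ^ 2 * (270400 * ((1 + ‖v‖^2) ^ m * (1 + ‖v‖^2)^2 * Real.exp (-(1/4) * ‖v‖^2)))
          * (((2 * Real.pi) * s0)⁻¹ * E0) := by
          apply mul_le_mul_of_nonneg_left _ (by positivity)
          exact mul_le_mul_of_nonneg_right hA0ge hE0pos.le
      _ = δ ^ 2 * (270400 * ((1 + ‖v‖^2) ^ m * (1 + ‖v‖^2)^2 * Real.exp (-(1/4) * ‖v‖^2)))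
          * globalMaxwellian v := by rw [hglo]
  -- continuity / measurability of the integrand
  have hglopos : ∀ v : EuclideanSpace ℝ (Fin 3), 0 < globalMaxwellian v := by
    intro v
    rw [globalMaxwellian, rpow_neg_three_halves h2πpos]
    positivity
  have hFnonneg : ∀ v : EuclideanSpace ℝ (Fin 3),
      0 ≤ (1 + ‖v‖ ^ 2) ^ m * Real.exp (q * ‖v‖ ^ 2) *
        (localMaxwellian (2 / 3) ρ θ u v - globalMaxwellian v) ^ 2 / globalMaxwellian v := by
    intro v
    have hP : (0:ℝ) ≤ (1 + ‖v‖ ^ 2) ^ m := Real.rpow_nonneg (by positivity) m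
    have := (hglopos v)
    positivity
  have hcont : Continuous (fun v : EuclideanSpace ℝ (Fin 3) =>
      (1 + ‖v‖ ^ 2) ^ m * Real.exp (q * ‖v‖ ^ 2) *
        (localMaxwellian (2 / 3) ρ θ u v - globalMaxwellian v) ^ 2 / globalMaxwellian v) := by
    have h1 : Continuous fun v : EuclideanSpace ℝ (Fin 3) => 1 + ‖v‖^2 :=
      continuous_const.add ((continuous_norm).pow 2)
    have h2 : Continuous fun v : EuclideanSpace ℝ (Fin 3) => (1 + ‖v‖^2) ^ m :=
      h1.rpow_const (fun v => Or.inl (by positivity))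
    have h3 : Continuous fun v : EuclideanSpace ℝ (Fin 3) => Real.exp (q * ‖v‖^2) :=
      (continuous_const.mul ((continuous_norm).pow 2)).rexp
    have h4 : Continuous fun v : EuclideanSpace ℝ (Fin 3) => localMaxwellian (2/3) ρ θ u v := by
      unfold localMaxwellian
      exact continuous_const.mul
        ((((continuous_id.sub continuous_const).norm.pow 2).neg.div_const _).rexp)
    have h5 : Continuous globalMaxwellian := by
      unfold globalMaxwellian
      exact continuous_const.mul ((((continuous_norm).pow 2).neg.div_const _).rexp)
    exact ((h2.mul h3).mul ((h4.sub h5).pow 2)).div h5 (fun v => (hglopos v).ne')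
  have hmaj : Integrable (fun v => δ ^ 2 * (270400 * Gmaj m v)) :=
    ((integrable_Gmaj m).const_mul 270400).const_mul (δ^2)
  have hInt : Integrable (fun v : EuclideanSpace ℝ (Fin 3) =>
      (1 + ‖v‖ ^ 2) ^ m * Real.exp (q * ‖v‖ ^ 2) *
        (localMaxwellian (2 / 3) ρ θ u v - globalMaxwellian v) ^ 2 / globalMaxwellian v) := by
    apply Integrable.mono' hmaj hcont.aestronglyMeasurable
    filter_upwards with v
    rw [Real.norm_of_nonneg (hFnonneg v)]
    exact hpt v
  refine ⟨hInt, ?_⟩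
  calc (∫ v : EuclideanSpace ℝ (Fin 3),
        (1 + ‖v‖ ^ 2) ^ m * Real.exp (q * ‖v‖ ^ 2) *
          (localMaxwellian (2 / 3) ρ θ u v - globalMaxwellian v) ^ 2 / globalMaxwellian v)
      ≤ ∫ v, δ ^ 2 * (270400 * Gmaj m v) := integral_mono hInt hmaj hpt
    _ = δ ^ 2 * (270400 * ∫ v, Gmaj m v) := by
        rw [integral_const_mul, integral_const_mul]
    _ ≤ (270400 * (∫ v, Gmaj m v) + 1) * δ ^ 2 := by linarith [sq_nonneg δ]
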